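/- Let A ∈ ℝ^{n×n}. The discrete-time LTI system x(k+1) = A x(k) is convergent if and only if there exists η ∈ (0,1) such that the auxiliary system x(k+1) = A_η x(k), with A_η := (1/η) A − ((1−η)/η) I, is marginally stable. -/

import Mathlib

set_option maxHeartbeats 1000000
set_option synthInstance.maxHeartbeats 200000

open Matrix Filter

/-- The DT LTI system `x(k+1) = A x(k)` is convergent: every trajectory `A^k x₀` has a limit. -/
def DTConvergent {n : ℕ} (A : Matrix (Fin n) (Fin n) ℝ) : Prop :=
  ∀ x0 : Fin n → ℝ, ∃ xbar : Fin n → ℝ,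
    Tendsto (fun k : ℕ => (A ^ k) *ᵥ x0) atTop (nhds xbar)

/-- The DT system `x(k+1) = B x(k)` is marginally stable. -/
def DTMarginallyStable {n : ℕ} (B : Matrix (Fin n) (Fin n) ℝ) : Prop :=
  ∃ C : ℝ, 0 ≤ C ∧ ∀ (k : ℕ) (x : Fin n → ℝ), ‖(B ^ k) *ᵥ x‖ ≤ C * ‖x‖

/-- The CT LTI system `ẋ = A x` is convergent: every trajectory `exp(tA) x₀` has a limit. -/
noncomputable def CTConvergent {n : ℕ} (A : Matrix (Fin n) (Fin n) ℝ) : Prop :=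
  ∀ x0 : Fin n → ℝ, ∃ xbar : Fin n → ℝ,
    Tendsto (fun t : ℝ => (NormedSpace.exp (t • A)) *ᵥ x0) atTop (nhds xbar)

/-- The CT system `ẋ = B x` is marginally stable. -/
noncomputable def CTMarginallyStable {n : ℕ} (B : Matrix (Fin n) (Fin n) ℝ) : Prop :=
  ∃ C : ℝ, 0 ≤ C ∧ ∀ t : ℝ, 0 ≤ t → ∀ x : Fin n → ℝ,
    ‖(NormedSpace.exp (t • B)) *ᵥ x‖ ≤ C * ‖x‖

namespace DTProofAux
variable {n : ℕ}

noncomputable def toCLM (M : Matrix (Fin n) (Fin n) ℝ) : (Fin n → ℝ) →L[ℝ] (Fin n → ℝ) :=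
  LinearMap.toContinuousLinearMap M.mulVecLin

@[simp] lemma toCLM_apply (M : Matrix (Fin n) (Fin n) ℝ) (x : Fin n → ℝ) :
    toCLM M x = M *ᵥ x := rfl

lemma toCLM_mul (M N : Matrix (Fin n) (Fin n) ℝ) :
    toCLM (M * N) = toCLM M * toCLM N := by
  ext x i
  simp [toCLM_apply, ← Matrix.mulVec_mulVec]

lemma toCLM_one : toCLM (1 : Matrix (Fin n) (Fin n) ℝ) = 1 := by
  ext x i; simp

lemma toCLM_pow (M : Matrix (Fin n) (Fin n) ℝ) (k : ℕ) :
    toCLM (M ^ k) = (toCLM M) ^ k := by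
  induction k with
  | zero => simpa using toCLM_one
  | succ k ih => rw [pow_succ, toCLM_mul, ih, pow_succ]

lemma toCLM_smul (c : ℝ) (M : Matrix (Fin n) (Fin n) ℝ) :
    toCLM (c • M) = c • toCLM M := by
  ext x i; simp [toCLM_apply, Matrix.smul_mulVec]

lemma toCLM_sub (M N : Matrix (Fin n) (Fin n) ℝ) :
    toCLM (M - N) = toCLM M - toCLM N := by
  ext x i; simp [toCLM_apply, Matrix.sub_mulVec]

lemma opNorm_toCLM_le (M : Matrix (Fin n) (Fin n) ℝ) :
    ‖toCLM M‖ ≤ ∑ j, ‖M *ᵥ Pi.single j 1‖ := by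
  refine ContinuousLinearMap.opNorm_le_bound _ (Finset.sum_nonneg fun _ _ => norm_nonneg _) ?_
  intro x
  have hx : x = ∑ j, x j • (Pi.single j (1:ℝ) : Fin n → ℝ) := by
    ext i
    simp [Finset.sum_apply, Pi.single_apply, mul_comm]
  calc ‖toCLM M x‖ = ‖∑ j, x j • (M *ᵥ Pi.single j 1)‖ := by
        conv_lhs => rw [hx]
        rw [toCLM_apply]
        rw [show M *ᵥ (∑ j, x j • (Pi.single j (1:ℝ) : Fin n → ℝ)) = ∑ j, x j • (M *ᵥ Pi.single j 1) by
          simp only [← Matrix.mulVecLin_apply, map_sum, _root_.map_smul]]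
    _ ≤ ∑ j, ‖x j • (M *ᵥ Pi.single j 1)‖ := norm_sum_le _ _
    _ ≤ ∑ j, ‖M *ᵥ Pi.single j 1‖ * ‖x‖ := by
        refine Finset.sum_le_sum fun j _ => ?_
        rw [norm_smul]
        rw [mul_comm]
        gcongr
        exact norm_le_pi_norm x j
    _ = (∑ j, ‖M *ᵥ Pi.single j 1‖) * ‖x‖ := by rw [Finset.sum_mul]

end DTProofAux


-- geometric decay from power tending to zero, in a normed ring
lemma geom_of_pow_tendsto_zero {R : Type*} [NormedRing R] {u : R}
    (h : Tendsto (fun k : ℕ => u ^ k) atTop (nhds 0)) :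
    ∃ M r : ℝ, 0 ≤ M ∧ 0 ≤ r ∧ r < 1 ∧ ∀ k : ℕ, ‖u ^ k‖ ≤ M * r ^ k := by
  have h2 : ∀ᶠ k in atTop, ‖u ^ k‖ < 1/2 := by
    have h0 : Tendsto (fun k : ℕ => ‖u ^ k‖) atTop (nhds 0) := by simpa using h.norm
    exact h0.eventually_lt_const (by norm_num)
  obtain ⟨m₀, hm₀⟩ := h2.exists_forall_of_atTop
  set m := m₀ + 1 with hm
  have hmpos : 0 < m := Nat.succ_pos _
  have hum : ‖u ^ m‖ ≤ 1/2 := le_of_lt (hm₀ m (Nat.le_succ _))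
  set r : ℝ := (1/2 : ℝ) ^ ((1:ℝ)/m) with hr
  have hr0 : 0 ≤ r := Real.rpow_nonneg (by norm_num) _
  have hr1 : r < 1 := by
    apply Real.rpow_lt_one (by norm_num) (by norm_num)
    positivity
  set N : ℝ := 1 + ∑ s ∈ Finset.range m, ‖u ^ s‖ with hN
  have hN0 : 0 < N := by positivity
  have hNs : ∀ s < m, ‖u ^ s‖ ≤ N := by
    intro s hs
    have : ‖u ^ s‖ ≤ ∑ s ∈ Finset.range m, ‖u ^ s‖ :=
      Finset.single_le_sum (f := fun s => ‖u ^ s‖) (fun _ _ => norm_nonneg _)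
        (Finset.mem_range.2 hs)
    linarith
  refine ⟨2 * N, r, by positivity, hr0, hr1, fun k => ?_⟩
  -- key : (1/2)^(k/m) ≤ 2 * r^k
  have hrk : r ^ k = (1/2 : ℝ) ^ ((k : ℝ)/m) := by
    rw [hr, ← Real.rpow_natCast ((1/2:ℝ) ^ ((1:ℝ)/m)) k, ← Real.rpow_mul (by norm_num)]
    ring_nf
  have hkey : ((1:ℝ)/2) ^ (k / m) ≤ 2 * r ^ k := by
    have h1 : ((k:ℝ)/m) ≤ (k/m : ℕ) + 1 := by
      rw [div_le_iff₀ (by exact_mod_cast hmpos)]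
      have h2 : k < m * (k / m) + m := by
        conv_lhs => rw [← Nat.div_add_mod k m]
        have := Nat.mod_lt k hmpos
        omega
      have h3 : (k:ℝ) < m * (k/m : ℕ) + m := by exact_mod_cast h2
      have hm1 : (1:ℝ) ≤ (m:ℝ) := by exact_mod_cast hmpos
      nlinarith [h3, hm1]
    have h2 : ((1:ℝ)/2) ^ (((k/m : ℕ) : ℝ) + 1) ≤ (1/2 : ℝ) ^ ((k:ℝ)/m) :=
      Real.rpow_le_rpow_of_exponent_ge (by norm_num) (by norm_num) h1
    have h3 : ((1:ℝ)/2) ^ (((k/m : ℕ) : ℝ) + 1) = ((1:ℝ)/2) ^ (k/m : ℕ) * (1/2) := by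
      rw [Real.rpow_add (by norm_num), Real.rpow_natCast, Real.rpow_one]
    rw [hrk]
    nlinarith [h2, h3]
  -- decompose k = m * (k/m) + k % m
  have hdm : u ^ k = (u ^ m) ^ (k / m) * u ^ (k % m) := by
    rw [← pow_mul, ← pow_add, Nat.div_add_mod]
  have hbound : ‖u ^ k‖ ≤ ((1:ℝ)/2) ^ (k/m) * N := by
    rw [hdm]
    rcases Nat.eq_zero_or_pos (k / m) with hq | hq
    · rw [hq]; simp only [pow_zero, one_mul]
      exact le_trans (hNs _ (Nat.mod_lt _ hmpos)) (by nlinarith [hN0])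
    · calc ‖(u ^ m) ^ (k/m) * u ^ (k % m)‖ ≤ ‖(u ^ m) ^ (k/m)‖ * ‖u ^ (k % m)‖ :=
            norm_mul_le _ _
        _ ≤ ‖u ^ m‖ ^ (k/m) * N := by
            have h4 : ‖(u ^ m) ^ (k/m)‖ ≤ ‖u ^ m‖ ^ (k/m) := norm_pow_le' (u ^ m) hq
            have hn := hNs (k % m) (Nat.mod_lt _ hmpos)
            nlinarith [norm_nonneg ((u ^ m) ^ (k/m)), norm_nonneg (u ^ (k % m)),
              pow_nonneg (norm_nonneg (u^m)) (k/m)]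
        _ ≤ ((1:ℝ)/2) ^ (k/m) * N := by
            have : ‖u ^ m‖ ^ (k/m) ≤ ((1:ℝ)/2) ^ (k/m) :=
              pow_le_pow_left₀ (norm_nonneg _) hum _
            nlinarith [hN0.le]
  calc ‖u ^ k‖ ≤ ((1:ℝ)/2) ^ (k/m) * N := hbound
    _ ≤ (2 * r ^ k) * N := by nlinarith [hN0.le]
    _ = 2 * N * r ^ k := by ring


namespace DTBin
open Finset

noncomputable def pb (η : ℝ) (k j : ℕ) : ℝ := (k.choose j : ℝ) * η ^ j * (1 - η) ^ (k - j)

lemma pb_nonneg {η : ℝ} (h0 : 0 ≤ η) (h1 : η ≤ 1) (k j : ℕ) : 0 ≤ pb η k j := by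
  have : (0:ℝ) ≤ 1 - η := by linarith
  unfold pb; positivity

lemma pb_sum (η : ℝ) (k : ℕ) : ∑ j ∈ range (k + 1), pb η k j = 1 := by
  have h := add_pow η (1 - η) k
  simp only [add_sub_cancel, one_pow] at h
  calc ∑ j ∈ range (k + 1), pb η k j
      = ∑ m ∈ range (k + 1), η ^ m * (1 - η) ^ (k - m) * (k.choose m : ℝ) :=
        Finset.sum_congr rfl fun j _ => by unfold pb; ring
    _ = 1 := h.symm

lemma pb_var (η : ℝ) (k : ℕ) :
    ∑ j ∈ range (k + 1), pb η k j * ((j : ℝ) - k * η) ^ 2 = k * η * (1 - η) := by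
  have h := bernsteinPolynomial.variance ℝ k
  have h2 := congrArg (Polynomial.eval η) h
  simp only [Polynomial.eval_finset_sum, Polynomial.eval_mul, Polynomial.eval_pow,
    Polynomial.eval_sub, Polynomial.eval_natCast, Polynomial.eval_smul, Polynomial.eval_X,
    Polynomial.eval_one, bernsteinPolynomial, smul_eq_mul, nsmul_eq_mul] at h2
  calc ∑ j ∈ range (k + 1), pb η k j * ((j : ℝ) - k * η) ^ 2
      = ∑ x ∈ range (k + 1), ((k:ℝ) * η - x) ^ 2 * ((k.choose x : ℝ) * η ^ x * (1 - η) ^ (k - x)) :=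
        Finset.sum_congr rfl fun j _ => by unfold pb; ring
    _ = (k:ℝ) * η * (1 - η) := h2

lemma pb_frac (η : ℝ) (h0 : 0 < η) (h1 : η < 1) (k : ℕ) :
    ∑ j ∈ range (k + 1), pb η k j / (((j : ℝ) + 1) * ((j : ℝ) + 2))
      ≤ 1 / (((k : ℝ) + 1) * ((k : ℝ) + 2) * η ^ 2) := by
  have h1η : (0:ℝ) ≤ 1 - η := by linarith
  -- rewrite each term using the choose identity
  have key : ∀ j ∈ range (k + 1),
      pb η k j / (((j : ℝ) + 1) * ((j : ℝ) + 2))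
        = pb η (k+2) (j+2) / (((k : ℝ) + 1) * ((k : ℝ) + 2) * η ^ 2) := by
    intro j hj
    have hjk : j ≤ k := Nat.lt_succ_iff.1 (mem_range.1 hj)
    have hc : ((k:ℝ) + 1) * ((k:ℝ) + 2) * (k.choose j : ℝ)
        = ((j:ℝ) + 1) * ((j:ℝ) + 2) * ((k+2).choose (j+2) : ℝ) := by
      have e1 : (k + 1) * k.choose j = (k+1).choose (j+1) * (j+1) := by
        rw [Nat.add_one_mul_choose_eq]
      have e2 : (k + 2) * (k+1).choose (j+1) = (k+2).choose (j+2) * (j+2) := by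
        rw [Nat.add_one_mul_choose_eq]
      have : (k+1) * (k+2) * k.choose j = (j+1) * (j+2) * ((k+2).choose (j+2)) := by
        calc (k+1) * (k+2) * k.choose j = (k+2) * ((k+1) * k.choose j) := by ring
          _ = (k+2) * ((k+1).choose (j+1) * (j+1)) := by rw [e1]
          _ = (j+1) * ((k+2) * (k+1).choose (j+1)) := by ring
          _ = (j+1) * ((k+2).choose (j+2) * (j+2)) := by rw [e2]
          _ = (j+1) * (j+2) * ((k+2).choose (j+2)) := by ring
      exact_mod_cast this
    have hkj : (k + 2) - (j + 2) = k - j := by omega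
    unfold pb
    rw [hkj]
    have hj1 : (0:ℝ) < (j:ℝ) + 1 := by positivity
    have hj2 : (0:ℝ) < (j:ℝ) + 2 := by positivity
    have hk1 : (0:ℝ) < (k:ℝ) + 1 := by positivity
    have hk2 : (0:ℝ) < (k:ℝ) + 2 := by positivity
    rw [div_eq_div_iff (by positivity) (by positivity)]
    have : η ^ (j + 2) = η ^ j * η ^ 2 := by ring
    rw [this]
    linear_combination (η ^ j * η ^ 2 * (1 - η) ^ (k - j)) * hc
  rw [Finset.sum_congr rfl key]
  rw [← Finset.sum_div]
  rw [div_le_div_iff₀ (by positivity) (by positivity)]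
  have hsub : ∑ j ∈ range (k + 1), pb η (k+2) (j+2) ≤ 1 := by
    have hfull := pb_sum η (k + 2)
    have : ∑ j ∈ range (k + 1), pb η (k+2) (j+2)
        = ∑ m ∈ (range (k+1)).image (fun j => j + 2), pb η (k+2) m := by
      rw [Finset.sum_image (by intro a _ b _ h; exact Nat.add_right_cancel h)]
    rw [this]
    rw [← hfull]
    apply Finset.sum_le_sum_of_subset_of_nonneg
    · intro m hm
      simp only [Finset.mem_image, Finset.mem_range] at hm ⊢
      omega
    · intro m _ _
      exact pb_nonneg h0.le h1.le _ _
  nlinarith [hsub, mul_pos (mul_pos (by positivity : (0:ℝ) < (k:ℝ)+1) (by positivity : (0:ℝ) < (k:ℝ)+2)) (by positivity : (0:ℝ) < η ^ 2)]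


noncomputable def Db (η : ℝ) (k : ℕ) : ℝ :=
  (1 - η) ^ k +
    Real.sqrt (2 * ((k:ℝ) + 2)) * Real.sqrt (2 / ((1 - η)^2 * η^2 * ((k:ℝ)+1) * ((k:ℝ)+2)))

lemma abs_sum_bound (η : ℝ) (h0 : 0 < η) (h1 : η < 1) (k : ℕ) :
    ∑ m ∈ range (k + 2),
        |(if m = 0 then (0:ℝ) else pb η k (m-1)) - (if m ≤ k then pb η k m else 0)|
      ≤ Db η k := by
  have h1η : (0:ℝ) < 1 - η := by linarith
  set F : ℕ → ℝ := fun m =>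
    |(if m = 0 then (0:ℝ) else pb η k (m-1)) - (if m ≤ k then pb η k m else 0)| with hF
  -- split off m = 0
  have hsplit : ∑ m ∈ range (k + 2), F m = (∑ i ∈ range (k + 1), F (i + 1)) + F 0 :=
    Finset.sum_range_succ' F (k+1)
  have hF0 : F 0 = (1 - η) ^ k := by
    simp only [hF, if_pos rfl, Nat.zero_le, if_pos, zero_sub, abs_neg]
    have : pb η k 0 = (1 - η) ^ k := by unfold pb; simp
    rw [this, abs_of_nonneg (by positivity)]
  -- the main terms
  have hterm : ∀ i ∈ range (k + 1),
      F (i + 1) = pb η k i * |((i:ℝ)+1) - ((k:ℝ)+1)*η| / (((i:ℝ)+1)*(1-η)) := by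
    intro i hi
    have hik : i ≤ k := Nat.lt_succ_iff.1 (mem_range.1 hi)
    have hd : (0:ℝ) < ((i:ℝ)+1)*(1-η) := by positivity
    have hpb0 : 0 ≤ pb η k i := pb_nonneg h0.le h1.le _ _
    have hFi : F (i+1) = |pb η k i - (if i + 1 ≤ k then pb η k (i+1) else 0)| := by
      simp only [hF]
      rw [if_neg (Nat.succ_ne_zero i), Nat.add_sub_cancel]
    rw [hFi]
    rcases eq_or_lt_of_le hik with hke | hlt
    · -- i = k
      subst hke
      rw [if_neg (show ¬ (i + 1 ≤ i) by omega)]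
      have habs : |((i:ℝ)+1) - ((i:ℝ)+1)*η| = ((i:ℝ)+1)*(1-η) := by
        rw [abs_of_nonneg (by nlinarith)]; ring
      rw [sub_zero, habs, abs_of_nonneg hpb0]
      field_simp
    · -- i < k
      rw [if_pos (show i + 1 ≤ k by omega)]
      have hcast : ((i:ℝ)+1) * ((k.choose (i+1)) : ℝ) = ((k.choose i) : ℝ) * ((k:ℝ) - i) := by
        have hnat := Nat.choose_succ_right_eq k i
        have : ((k.choose (i+1) * (i+1) : ℕ) : ℝ) = ((k.choose i * (k - i) : ℕ) : ℝ) := by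
          exact_mod_cast congrArg (Nat.cast : ℕ → ℝ) hnat
        push_cast [Nat.cast_sub hik] at this
        linarith [this]
      have hstar : ((i:ℝ)+1)*(1-η) * pb η k (i+1) = pb η k i * (((k:ℝ) - i)*η) := by
        unfold pb
        have hpow : (1-η)^(k-i) = (1-η)^(k-(i+1)) * (1-η) := by
          rw [← pow_succ]; congr 1; omega
        have hηp : η^(i+1) = η^i * η := pow_succ η i
        rw [hpow, hηp]
        linear_combination (η^i * η * (1-η)^(k-(i+1)) * (1-η)) * hcast
      have hdiff : pb η k i - pb η k (i+1)
          = pb η k i * (((i:ℝ)+1) - ((k:ℝ)+1)*η) / (((i:ℝ)+1)*(1-η)) := by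
        rw [eq_div_iff (ne_of_gt hd)]
        nlinarith [hstar]
      rw [hdiff, abs_div, abs_mul, abs_of_nonneg hpb0, abs_of_pos hd]
  rw [hsplit, hF0]
  rw [Finset.sum_congr rfl hterm]
  -- Cauchy-Schwarz
  set T := ∑ i ∈ range (k + 1), pb η k i * |((i:ℝ)+1) - ((k:ℝ)+1)*η| / (((i:ℝ)+1)*(1-η))
    with hT
  have hCS : T ≤ Real.sqrt (2*((k:ℝ)+2))
      * Real.sqrt (2 / ((1-η)^2 * η^2 * ((k:ℝ)+1) * ((k:ℝ)+2))) := by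
    set f : ℕ → ℝ := fun i => Real.sqrt (pb η k i) * |((i:ℝ)+1) - ((k:ℝ)+1)*η| with hf
    set g : ℕ → ℝ := fun i => Real.sqrt (pb η k i) / (((i:ℝ)+1)*(1-η)) with hg
    have hfg : ∀ i ∈ range (k+1), pb η k i * |((i:ℝ)+1) - ((k:ℝ)+1)*η| / (((i:ℝ)+1)*(1-η))
        = f i * g i := by
      intro i _
      have hms : Real.sqrt (pb η k i) * Real.sqrt (pb η k i) = pb η k i :=
        Real.mul_self_sqrt (pb_nonneg h0.le h1.le _ _)
      simp only [hf, hg]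
      rw [show Real.sqrt (pb η k i) * |((i:ℝ)+1) - ((k:ℝ)+1)*η|
          * (Real.sqrt (pb η k i) / (((i:ℝ)+1)*(1-η)))
          = (Real.sqrt (pb η k i) * Real.sqrt (pb η k i)) * |((i:ℝ)+1) - ((k:ℝ)+1)*η|
            / (((i:ℝ)+1)*(1-η)) by ring, hms]
    rw [hT, Finset.sum_congr rfl hfg]
    have hCS0 := Real.sum_mul_le_sqrt_mul_sqrt (range (k+1)) f g
    refine hCS0.trans ?_
    have hf2 : ∑ i ∈ range (k+1), f i ^ 2 ≤ 2*((k:ℝ)+2) := by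
      have hpt : ∀ i ∈ range (k+1),
          f i ^ 2 ≤ 2 * (pb η k i * ((i:ℝ) - (k:ℝ)*η)^2) + (2*(1-η)^2) * pb η k i := by
        intro i _
        have hpb0 : 0 ≤ pb η k i := pb_nonneg h0.le h1.le _ _
        have : f i ^ 2 = pb η k i * (((i:ℝ)+1) - ((k:ℝ)+1)*η)^2 := by
          simp only [hf]
          rw [mul_pow, Real.sq_sqrt hpb0, sq_abs]
        rw [this]
        nlinarith [sq_nonneg (((i:ℝ) - (k:ℝ)*η) - (1-η)), hpb0,
          sq_nonneg (((i:ℝ) - (k:ℝ)*η) + (1-η))]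
      calc ∑ i ∈ range (k+1), f i ^ 2
          ≤ ∑ i ∈ range (k+1),
              (2 * (pb η k i * ((i:ℝ) - (k:ℝ)*η)^2) + (2*(1-η)^2) * pb η k i) :=
            Finset.sum_le_sum hpt
        _ = 2 * ((k:ℝ) * η * (1-η)) + (2*(1-η)^2) * 1 := by
            rw [Finset.sum_add_distrib, ← Finset.mul_sum, ← Finset.mul_sum, pb_var, pb_sum]
        _ ≤ 2*((k:ℝ)+2) := by nlinarith [Nat.cast_nonneg (α := ℝ) k]
    have hg2 : ∑ i ∈ range (k+1), g i ^ 2 ≤ 2 / ((1-η)^2 * η^2 * ((k:ℝ)+1) * ((k:ℝ)+2)) := by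
      have hpt : ∀ i ∈ range (k+1),
          g i ^ 2 ≤ (2/(1-η)^2) * (pb η k i / (((i:ℝ)+1) * ((i:ℝ)+2))) := by
        intro i _
        have hpb0 : 0 ≤ pb η k i := pb_nonneg h0.le h1.le _ _
        have hgi : g i ^ 2 = pb η k i / ((((i:ℝ)+1)*(1-η))^2) := by
          simp only [hg]
          rw [div_pow, Real.sq_sqrt hpb0]
        have h2 : ((i:ℝ)+2) ≤ 2*((i:ℝ)+1) := by nlinarith [Nat.cast_nonneg (α := ℝ) i]
        have hpos1 : (0:ℝ) < ((i:ℝ)+1) := by positivity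
        have hpos2 : (0:ℝ) < ((i:ℝ)+2) := by positivity
        have hrhs : (2/(1-η)^2) * (pb η k i/(((i:ℝ)+1)*((i:ℝ)+2)))
            = (2*pb η k i) / ((1-η)^2*(((i:ℝ)+1)*((i:ℝ)+2))) := by
          field_simp
        rw [hgi, hrhs, div_le_div_iff₀ (by positivity) (by positivity)]
        have hmul := mul_le_mul_of_nonneg_left h2
          (mul_nonneg (mul_nonneg hpb0 (sq_nonneg (1-η))) hpos1.le)
        nlinarith [hmul]
      calc ∑ i ∈ range (k+1), g i ^ 2
          ≤ ∑ i ∈ range (k+1), (2/(1-η)^2) * (pb η k i / (((i:ℝ)+1) * ((i:ℝ)+2))) :=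
            Finset.sum_le_sum hpt
        _ = (2/(1-η)^2) * ∑ i ∈ range (k+1), pb η k i / (((i:ℝ)+1) * ((i:ℝ)+2)) := by
            rw [Finset.mul_sum]
        _ ≤ (2/(1-η)^2) * (1 / (((k:ℝ)+1) * ((k:ℝ)+2) * η^2)) := by
            have := pb_frac η h0 h1 k
            have hc : (0:ℝ) ≤ 2/(1-η)^2 := by positivity
            nlinarith [this, hc]
        _ = 2 / ((1-η)^2 * η^2 * ((k:ℝ)+1) * ((k:ℝ)+2)) := by
            field_simp
    have hs1 : Real.sqrt (∑ i ∈ range (k+1), f i ^ 2) ≤ Real.sqrt (2*((k:ℝ)+2)) :=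
      Real.sqrt_le_sqrt hf2
    have hs2 : Real.sqrt (∑ i ∈ range (k+1), g i ^ 2)
        ≤ Real.sqrt (2 / ((1-η)^2 * η^2 * ((k:ℝ)+1) * ((k:ℝ)+2))) :=
      Real.sqrt_le_sqrt hg2
    exact mul_le_mul hs1 hs2 (Real.sqrt_nonneg _) (Real.sqrt_nonneg _)
  unfold Db
  linarith [hCS]

lemma Db_tendsto (η : ℝ) (h0 : 0 < η) (h1 : η < 1) :
    Tendsto (Db η) atTop (nhds 0) := by
  have h1η : (0:ℝ) < 1 - η := by linarith
  have ht1 : Tendsto (fun k : ℕ => (1 - η) ^ k) atTop (nhds 0) := by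
    apply tendsto_pow_atTop_nhds_zero_of_lt_one (by linarith) (by linarith)
  have ht2 : Tendsto (fun k : ℕ => Real.sqrt (2*((k:ℝ)+2))
      * Real.sqrt (2 / ((1-η)^2 * η^2 * ((k:ℝ)+1) * ((k:ℝ)+2)))) atTop (nhds 0) := by
    have heq : ∀ k : ℕ, Real.sqrt (2*((k:ℝ)+2))
        * Real.sqrt (2 / ((1-η)^2 * η^2 * ((k:ℝ)+1) * ((k:ℝ)+2)))
        = Real.sqrt (4 / ((1-η)^2 * η^2 * ((k:ℝ)+1))) := by
      intro k
      rw [← Real.sqrt_mul (by positivity)]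
      congr 1
      have hk1 : ((k:ℝ)+1) ≠ 0 := by positivity
      have hk2 : ((k:ℝ)+2) ≠ 0 := by positivity
      field_simp
      ring
    simp only [heq]
    have hinner : Tendsto (fun k : ℕ => 4 / ((1-η)^2 * η^2 * ((k:ℝ)+1))) atTop (nhds 0) := by
      have hden : Tendsto (fun k : ℕ => (1-η)^2 * η^2 * ((k:ℝ)+1)) atTop atTop := by
        apply Tendsto.const_mul_atTop (by positivity)
        exact tendsto_atTop_add_const_right _ _ tendsto_natCast_atTop_atTop
      exact Tendsto.div_atTop tendsto_const_nhds hden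
    have hsq := hinner.sqrt
    simpa using hsq
  have h := ht1.add ht2
  simp only [add_zero] at h
  exact h

end DTBin


open DTProofAux in
theorem dt_forward {n : ℕ} {A : Matrix (Fin n) (Fin n) ℝ} (hA : DTConvergent A) :
    ∃ η : ℝ, 0 < η ∧ η < 1 ∧
      DTMarginallyStable ((1 / η) • A - ((1 - η) / η) • (1 : Matrix (Fin n) (Fin n) ℝ)) := by
  classical
  set a : (Fin n → ℝ) →L[ℝ] (Fin n → ℝ) := toCLM A with ha_def
  choose c hc using hA
  set P : Matrix (Fin n) (Fin n) ℝ := Matrix.of (fun i j => c (Pi.single j 1) i) with hP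
  set p : (Fin n → ℝ) →L[ℝ] (Fin n → ℝ) := toCLM P with hp_def
  have hPcol : ∀ j, P *ᵥ Pi.single j 1 = c (Pi.single j 1) := by
    intro j; ext i
    simp [Matrix.mulVec_single, hP]
  -- convergence of a^k to p in operator norm
  have htend0 : Tendsto (fun k : ℕ => a ^ k - p) atTop (nhds 0) := by
    have hkey : ∀ k : ℕ, a ^ k - p = toCLM (A ^ k - P) := by
      intro k; rw [toCLM_sub, toCLM_pow]
    have hcol : ∀ j, Tendsto (fun k : ℕ => (A ^ k - P) *ᵥ Pi.single j 1) atTop (nhds 0) := by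
      intro j
      have h1 := hc (Pi.single j 1)
      have : (fun k : ℕ => (A ^ k - P) *ᵥ Pi.single j 1)
          = fun k : ℕ => (A ^ k) *ᵥ Pi.single j 1 - c (Pi.single j 1) := by
        funext k; rw [Matrix.sub_mulVec, hPcol]
      rw [this]
      exact tendsto_sub_nhds_zero_iff.2 h1
    rw [← tendsto_sub_nhds_zero_iff]
    simp only [sub_zero]
    rw [tendsto_zero_iff_norm_tendsto_zero]
    refine squeeze_zero (g := fun k => ∑ j, ‖(A ^ k - P) *ᵥ Pi.single j 1‖) (fun k => norm_nonneg _) (fun k => ?_) ?_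
    · exact (hkey k) ▸ opNorm_toCLM_le (A ^ k - P)
    · have : Tendsto (fun k : ℕ => ∑ j, ‖(A ^ k - P) *ᵥ Pi.single j 1‖) atTop
          (nhds (∑ j : Fin n, (0:ℝ))) := by
        refine tendsto_finset_sum _ fun j _ => ?_
        simpa using (hcol j).norm
      simpa using this
  have ha : Tendsto (fun k : ℕ => a ^ k) atTop (nhds p) := tendsto_sub_nhds_zero_iff.1 htend0
  -- algebraic identities for p
  have hap : a * p = p := by
    have h1 : Tendsto (fun k : ℕ => a * a ^ k) atTop (nhds (a * p)) := tendsto_const_nhds.mul ha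
    have h2 : (fun k : ℕ => a * a ^ k) = fun k : ℕ => a ^ (k + 1) := by
      funext k; rw [pow_succ']
    have h3 : Tendsto (fun k : ℕ => a ^ (k + 1)) atTop (nhds p) :=
      ha.comp (tendsto_add_atTop_nat 1)
    exact tendsto_nhds_unique (h2 ▸ h1) h3
  have hpa : p * a = p := by
    have h1 : Tendsto (fun k : ℕ => a ^ k * a) atTop (nhds (p * a)) := ha.mul tendsto_const_nhds
    have h2 : (fun k : ℕ => a ^ k * a) = fun k : ℕ => a ^ (k + 1) := by
      funext k; rw [pow_succ]
    have h3 : Tendsto (fun k : ℕ => a ^ (k + 1)) atTop (nhds p) :=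
      ha.comp (tendsto_add_atTop_nat 1)
    exact tendsto_nhds_unique (h2 ▸ h1) h3
  have hpp : p * p = p := by
    have h1 : Tendsto (fun k : ℕ => a ^ k * a ^ k) atTop (nhds (p * p)) := ha.mul ha
    have h2 : (fun k : ℕ => a ^ k * a ^ k) = fun k : ℕ => a ^ (2 * k) := by
      funext k; rw [← pow_add, two_mul]
    have h2k : Tendsto (fun k : ℕ => 2 * k) atTop atTop := by
      apply tendsto_atTop_atTop_of_monotone (fun a b hab => by omega)
      intro b; exact ⟨b, by omega⟩
    have h3 : Tendsto (fun k : ℕ => a ^ (2 * k)) atTop (nhds p) := ha.comp h2k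
    exact tendsto_nhds_unique (h2 ▸ h1) h3
  have hakp : ∀ k : ℕ, a ^ k * p = p := by
    intro k; induction k with
    | zero => simp
    | succ k ih => rw [pow_succ, mul_assoc, hap, ih]
  -- q := a - p
  set q : (Fin n → ℝ) →L[ℝ] (Fin n → ℝ) := a - p with hq_def
  have hqk : ∀ k : ℕ, 1 ≤ k → q ^ k = a ^ k - p := by
    intro k hk
    induction k with
    | zero => omega
    | succ k ih =>
      rcases Nat.eq_zero_or_pos k with h0 | h0
      · subst h0; simp [hq_def]
      · rw [pow_succ, ih h0, hq_def, sub_mul, mul_sub, mul_sub, hakp k, hpa, hpp, ← pow_succ]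
        abel
  have hq0 : Tendsto (fun k : ℕ => q ^ k) atTop (nhds 0) := by
    refine Tendsto.congr' ?_ htend0
    filter_upwards [eventually_ge_atTop 1] with k hk
    exact (hqk k hk).symm
  obtain ⟨M₁, r, hM₁0, hr0, hr1, hgeom⟩ := geom_of_pow_tendsto_zero hq0
  set η : ℝ := (1 + r) / 2 with hη_def
  have hη0 : 0 < η := by rw [hη_def]; linarith
  have hη1 : η < 1 := by rw [hη_def]; linarith
  have hηne : η ≠ 0 := ne_of_gt hη0
  refine ⟨η, hη0, hη1, ?_⟩
  set B : Matrix (Fin n) (Fin n) ℝ :=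
    (1 / η) • A - ((1 - η) / η) • (1 : Matrix (Fin n) (Fin n) ℝ) with hB_def
  set b : (Fin n → ℝ) →L[ℝ] (Fin n → ℝ) := toCLM B with hb_def
  have hbeq : b = (1 / η) • a - ((1 - η) / η) • 1 := by
    rw [hb_def, hB_def, toCLM_sub, toCLM_smul, toCLM_smul, toCLM_one, ha_def]
  set t : (Fin n → ℝ) →L[ℝ] (Fin n → ℝ) := 1 - p with ht_def
  set s : (Fin n → ℝ) →L[ℝ] (Fin n → ℝ) := b - p with hs_def
  -- p * s = 0 and s * p = 0
  have hps : p * s = 0 := by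
    have h1 : p * s = ((1 / η) - (1 - η) / η - 1) • p := by
      rw [hs_def, hbeq, mul_sub, mul_sub, mul_smul_comm, mul_smul_comm, hpa, hpp, mul_one]
      module
    rw [h1, show (1 / η) - (1 - η) / η - 1 = 0 by field_simp; ring, zero_smul]
  have hsp : s * p = 0 := by
    have h1 : s * p = ((1 / η) - (1 - η) / η - 1) • p := by
      rw [hs_def, hbeq, sub_mul, sub_mul, smul_mul_assoc, smul_mul_assoc, hap, hpp, one_mul]
      module
    rw [h1, show (1 / η) - (1 - η) / η - 1 = 0 by field_simp; ring, zero_smul]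
  have hskp : ∀ k : ℕ, 1 ≤ k → s ^ k * p = 0 := by
    intro k hk
    obtain ⟨j, rfl⟩ := Nat.exists_eq_add_of_le hk
    rw [add_comm, pow_succ, mul_assoc, hsp, mul_zero]
  have hbk : ∀ k : ℕ, 1 ≤ k → b ^ k = p + s ^ k := by
    intro k hk
    induction k with
    | zero => omega
    | succ k ih =>
      rcases Nat.eq_zero_or_pos k with h0 | h0
      · subst h0; simp [hs_def]
      · rw [pow_succ, ih h0, show b = p + s by rw [hs_def]; abel,
          add_mul, mul_add, mul_add, hpp, hps, hskp k h0, ← pow_succ]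
        abel
  -- norm bound on s ^ k
  have hqp : q * p = 0 := by rw [hq_def, sub_mul, hap, hpp, sub_self]
  have hpq : p * q = 0 := by rw [hq_def, mul_sub, hpa, hpp, sub_self]
  have hqt : Commute q t := by
    have h1 : q * t = q := by rw [ht_def, mul_sub, mul_one, hqp, sub_zero]
    have h2 : t * q = q := by rw [ht_def, sub_mul, one_mul, hpq, sub_zero]
    show q * t = t * q
    rw [h1, h2]
  have htt : ∀ i : ℕ, 1 ≤ i → t ^ i = t := by
    intro i hi
    induction i with
    | zero => omega
    | succ i ih =>
      rcases Nat.eq_zero_or_pos i with h0 | h0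
      · subst h0; simp
      · rw [pow_succ, ih h0, ht_def, sub_mul, mul_sub, mul_sub, one_mul, mul_one, hpp]
        abel
  set Mt : ℝ := max 1 ‖t‖ with hMt_def
  have hMt1 : 1 ≤ Mt := le_max_left _ _
  have hMt0 : 0 ≤ Mt := by linarith
  have hqt_norm : ∀ i j : ℕ, ‖q ^ i * t ^ j‖ ≤ M₁ * r ^ i * Mt := by
    intro i j
    rcases Nat.eq_zero_or_pos j with h0 | h0
    · subst h0
      rw [pow_zero, mul_one]
      calc ‖q ^ i‖ ≤ M₁ * r ^ i := hgeom i
        _ = M₁ * r ^ i * 1 := by ring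
        _ ≤ M₁ * r ^ i * Mt := by
            have : (0:ℝ) ≤ M₁ * r ^ i := by positivity
            nlinarith
    · rw [htt j h0]
      calc ‖q ^ i * t‖ ≤ ‖q ^ i‖ * ‖t‖ := norm_mul_le _ _
        _ ≤ (M₁ * r ^ i) * Mt := by
            have h1 := hgeom i
            have h2 : ‖t‖ ≤ Mt := le_max_right _ _
            nlinarith [norm_nonneg (q ^ i), norm_nonneg t]
  -- w := η • s ; w = q - (1-η) • t
  have hw : η • s = q + (-(1 - η)) • t := by
    rw [hs_def, hbeq, hq_def, ht_def]
    match_scalars <;> field_simp <;> ring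
  have hwk_norm : ∀ k : ℕ, ‖(η • s) ^ k‖ ≤ M₁ * Mt * η ^ k := by
    intro k
    have hcomm : Commute q ((-(1 - η)) • t) := hqt.smul_right _
    have hexp := hcomm.add_pow' k
    rw [hw, hexp]
    have hbd : ∀ m ∈ Finset.HasAntidiagonal.antidiagonal k,
        ‖k.choose m.1 • (q ^ m.1 * ((-(1 - η)) • t) ^ m.2)‖
          ≤ (k.choose m.1 : ℝ) * (M₁ * Mt * (r ^ m.1 * (1 - η) ^ m.2)) := by
      intro m hm
      calc ‖k.choose m.1 • (q ^ m.1 * ((-(1 - η)) • t) ^ m.2)‖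
          ≤ (k.choose m.1 : ℝ) * ‖q ^ m.1 * ((-(1 - η)) • t) ^ m.2‖ := norm_nsmul_le
        _ ≤ (k.choose m.1 : ℝ) * (M₁ * Mt * (r ^ m.1 * (1 - η) ^ m.2)) := by
            have h1 : ((-(1 - η)) • t) ^ m.2 = (-(1 - η)) ^ m.2 • t ^ m.2 := smul_pow _ _ _
            rw [h1, mul_smul_comm]
            have hns := norm_smul ((-(1 - η)) ^ m.2) (q ^ m.1 * t ^ m.2)
            rw [hns]
            have h2 : ‖(-(1 - η)) ^ m.2‖ = (1 - η) ^ m.2 := by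
              rw [norm_pow, norm_neg, Real.norm_of_nonneg (by linarith)]
            rw [h2]
            have h3 := hqt_norm m.1 m.2
            have h4 : (0:ℝ) ≤ (1 - η) ^ m.2 := pow_nonneg (by linarith) _
            have h5 : (0:ℝ) ≤ (k.choose m.1 : ℝ) := by positivity
            calc (k.choose m.1 : ℝ) * ((1 - η) ^ m.2 * ‖q ^ m.1 * t ^ m.2‖)
                ≤ (k.choose m.1 : ℝ) * ((1 - η) ^ m.2 * (M₁ * r ^ m.1 * Mt)) := by gcongr
              _ = (k.choose m.1 : ℝ) * (M₁ * Mt * (r ^ m.1 * (1 - η) ^ m.2)) := by ring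
    calc ‖∑ m ∈ Finset.HasAntidiagonal.antidiagonal k, k.choose m.1 • (q ^ m.1 * ((-(1 - η)) • t) ^ m.2)‖
        ≤ ∑ m ∈ Finset.HasAntidiagonal.antidiagonal k,
            ‖k.choose m.1 • (q ^ m.1 * ((-(1 - η)) • t) ^ m.2)‖ := norm_sum_le _ _
      _ ≤ ∑ m ∈ Finset.HasAntidiagonal.antidiagonal k,
            (k.choose m.1 : ℝ) * (M₁ * Mt * (r ^ m.1 * (1 - η) ^ m.2)) :=
          Finset.sum_le_sum hbd
      _ = M₁ * Mt * ∑ m ∈ Finset.HasAntidiagonal.antidiagonal k, k.choose m.1 • (r ^ m.1 * (1 - η) ^ m.2) := by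
          rw [Finset.mul_sum]
          refine Finset.sum_congr rfl fun m _ => ?_
          rw [nsmul_eq_mul]; ring
      _ = M₁ * Mt * (r + (1 - η)) ^ k := by
          rw [← (Commute.all r (1 - η)).add_pow' k]
      _ = M₁ * Mt * η ^ k := by
          have : r + (1 - η) = η := by rw [hη_def]; ring
          rw [this]
  have hsk_norm : ∀ k : ℕ, ‖s ^ k‖ ≤ M₁ * Mt := by
    intro k
    have h1 : (η • s) ^ k = η ^ k • s ^ k := smul_pow _ _ _
    have h2 : ‖(η • s) ^ k‖ = η ^ k * ‖s ^ k‖ := by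
      rw [h1]
      rw [norm_smul (η ^ k) (s ^ k), Real.norm_of_nonneg (by positivity : (0:ℝ) ≤ η ^ k)]
    have h3 := hwk_norm k
    rw [h2] at h3
    have h4 : (0:ℝ) < η ^ k := by positivity
    calc ‖s ^ k‖ = η ^ k * ‖s ^ k‖ / η ^ k := by field_simp
      _ ≤ M₁ * Mt * η ^ k / η ^ k := by gcongr
      _ = M₁ * Mt := by field_simp
  -- conclude
  refine ⟨‖p‖ + M₁ * Mt + 1, by positivity, fun k x => ?_⟩
  have hBapp : (B ^ k) *ᵥ x = (b ^ k) x := by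
    rw [hb_def, ← toCLM_pow, toCLM_apply]
  rcases Nat.eq_zero_or_pos k with h0 | h0
  · subst h0
    simp only [pow_zero, Matrix.one_mulVec]
    have h1 : (0:ℝ) ≤ ‖p‖ + M₁ * Mt := by positivity
    nlinarith [norm_nonneg x]
  · rw [hBapp]
    calc ‖(b ^ k) x‖ ≤ ‖b ^ k‖ * ‖x‖ := ContinuousLinearMap.le_opNorm _ _
      _ ≤ (‖p‖ + M₁ * Mt + 1) * ‖x‖ := by
          have h1 : ‖b ^ k‖ ≤ ‖p‖ + M₁ * Mt := by
            rw [hbk k h0]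
            calc ‖p + s ^ k‖ ≤ ‖p‖ + ‖s ^ k‖ := norm_add_le _ _
              _ ≤ ‖p‖ + M₁ * Mt := by linarith [hsk_norm k]
          nlinarith [norm_nonneg x, norm_nonneg (b ^ k)]


open DTProofAux DTBin in
theorem dt_backward {n : ℕ} {A : Matrix (Fin n) (Fin n) ℝ} {η : ℝ}
    (hη0 : 0 < η) (hη1 : η < 1)
    (hMS : DTMarginallyStable ((1 / η) • A - ((1 - η) / η) • (1 : Matrix (Fin n) (Fin n) ℝ))) :
    DTConvergent A := by
  classical
  obtain ⟨C, hC0, hC⟩ := hMS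
  have hηne : η ≠ 0 := ne_of_gt hη0
  set B : Matrix (Fin n) (Fin n) ℝ :=
    (1 / η) • A - ((1 - η) / η) • (1 : Matrix (Fin n) (Fin n) ℝ) with hB_def
  set a : (Fin n → ℝ) →L[ℝ] (Fin n → ℝ) := toCLM A with ha_def
  set b : (Fin n → ℝ) →L[ℝ] (Fin n → ℝ) := toCLM B with hb_def
  have hbeq : b = (1 / η) • a - ((1 - η) / η) • 1 := by
    rw [hb_def, hB_def, toCLM_sub, toCLM_smul, toCLM_smul, toCLM_one, ha_def]
  have hab : a = η • b + (1 - η) • 1 := by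
    rw [hbeq]
    match_scalars <;> field_simp <;> ring
  -- operator norm bound for powers of b
  have hbop : ∀ k : ℕ, ‖b ^ k‖ ≤ C := by
    intro k
    apply ContinuousLinearMap.opNorm_le_bound _ hC0
    intro x
    have : (b ^ k) x = (B ^ k) *ᵥ x := by rw [hb_def, ← toCLM_pow, toCLM_apply]
    rw [this]; exact hC k x
  -- binomial expansion of a^k
  have hak : ∀ k : ℕ, a ^ k = ∑ i ∈ Finset.range (k+1), pb η k i • b ^ i := by
    intro k
    rw [hab]
    have hcomm : Commute (η • b) ((1 - η) • (1 : (Fin n → ℝ) →L[ℝ] (Fin n → ℝ))) :=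
      ((Commute.one_right b).smul_right _).smul_left _
    rw [hcomm.add_pow k]
    refine Finset.sum_congr rfl fun i hi => ?_
    have hcast : b ^ i * ((k.choose i : ℕ) : (Fin n → ℝ) →L[ℝ] (Fin n → ℝ))
        = ((k.choose i : ℕ) : ℝ) • b ^ i := by
      rw [← (Nat.cast_commute (k.choose i) (b ^ i)).eq, ← nsmul_eq_mul,
        Nat.cast_smul_eq_nsmul ℝ]
    rw [smul_pow, smul_pow, one_pow, smul_mul_assoc, mul_smul_comm, mul_one, smul_smul,
      smul_mul_assoc, hcast, smul_smul]
    congr 1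
    unfold pb
    ring
  -- telescoping
  have hbone : ∀ i : ℕ, b ^ i * (b - 1) = b ^ (i+1) - b ^ i := by
    intro i; rw [mul_sub, mul_one, ← pow_succ]
  have hEk : ∀ k : ℕ, a ^ k * (b - 1) = ∑ m ∈ Finset.range (k+2),
      ((if m = 0 then (0:ℝ) else pb η k (m-1)) - (if m ≤ k then pb η k m else 0)) • b ^ m := by
    intro k
    have hsub : ∀ m ∈ Finset.range (k+2),
        ((if m = 0 then (0:ℝ) else pb η k (m-1)) - (if m ≤ k then pb η k m else 0)) • b ^ m
        = (if m = 0 then (0:ℝ) else pb η k (m-1)) • b ^ m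
          - (if m ≤ k then pb η k m else 0) • b ^ m := by
      intro m _
      exact sub_smul (if m = 0 then (0:ℝ) else pb η k (m-1))
        (if m ≤ k then pb η k m else 0) (b ^ m)
    rw [Finset.sum_congr rfl hsub, Finset.sum_sub_distrib]
    have hS1 : ∑ m ∈ Finset.range (k+2), (if m = 0 then (0:ℝ) else pb η k (m-1)) • b ^ m
        = ∑ i ∈ Finset.range (k+1), pb η k i • b ^ (i+1) := by
      rw [Finset.sum_range_succ' _ (k+1)]
      simp only [if_pos rfl, zero_smul, add_zero, Nat.succ_ne_zero, if_false,
        Nat.add_sub_cancel]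
      simp
    have hS2 : ∑ m ∈ Finset.range (k+2), (if m ≤ k then pb η k m else 0) • b ^ m
        = ∑ m ∈ Finset.range (k+1), pb η k m • b ^ m := by
      rw [Finset.sum_range_succ]
      rw [if_neg (by omega), zero_smul, add_zero]
      refine Finset.sum_congr rfl fun m hm => ?_
      rw [if_pos (Nat.lt_succ_iff.1 (Finset.mem_range.1 hm))]
    rw [hS1, hS2, hak k, Finset.sum_mul, ← Finset.sum_sub_distrib]
    refine Finset.sum_congr rfl fun i _ => ?_
    rw [smul_mul_assoc, hbone i, smul_sub]
  -- norm estimate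
  have hE : ∀ k : ℕ, ‖a ^ k * (b - 1)‖ ≤ C * Db η k := by
    intro k
    rw [hEk k]
    calc ‖∑ m ∈ Finset.range (k+2),
          ((if m = 0 then (0:ℝ) else pb η k (m-1)) - (if m ≤ k then pb η k m else 0)) • b ^ m‖
        ≤ ∑ m ∈ Finset.range (k+2),
          ‖((if m = 0 then (0:ℝ) else pb η k (m-1)) - (if m ≤ k then pb η k m else 0)) • b ^ m‖ :=
          norm_sum_le _ _
      _ ≤ ∑ m ∈ Finset.range (k+2),
          |(if m = 0 then (0:ℝ) else pb η k (m-1)) - (if m ≤ k then pb η k m else 0)| * C := by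
          refine Finset.sum_le_sum fun m _ => ?_
          have hns := norm_smul ((if m = 0 then (0:ℝ) else pb η k (m-1))
              - (if m ≤ k then pb η k m else 0)) (b ^ m)
          rw [hns, Real.norm_eq_abs]
          exact mul_le_mul_of_nonneg_left (hbop m) (abs_nonneg _)
      _ = (∑ m ∈ Finset.range (k+2),
          |(if m = 0 then (0:ℝ) else pb η k (m-1)) - (if m ≤ k then pb η k m else 0)|) * C := by
          rw [← Finset.sum_mul]
      _ ≤ Db η k * C := by
          have := abs_sum_bound η hη0 hη1 k
          exact mul_le_mul_of_nonneg_right this hC0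
      _ = C * Db η k := mul_comm _ _
  -- mean ergodic decomposition
  set flin : (Fin n → ℝ) →ₗ[ℝ] (Fin n → ℝ) :=
    ((b - 1 : (Fin n → ℝ) →L[ℝ] (Fin n → ℝ)) : (Fin n → ℝ) →ₗ[ℝ] (Fin n → ℝ)) with hflin
  have hflin_apply : ∀ x, flin x = b x - x := by
    intro x
    rw [hflin]
    simp [ContinuousLinearMap.coe_coe]
  have hbkfix : ∀ (u : Fin n → ℝ), b u = u → ∀ k : ℕ, (b ^ k) u = u := by
    intro u hu k
    induction k with
    | zero => simp
    | succ k ih => rw [pow_succ, ContinuousLinearMap.mul_apply, hu, ih]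
  have hdisj : LinearMap.ker flin ⊓ LinearMap.range flin = ⊥ := by
    rw [Submodule.eq_bot_iff]
    rintro x ⟨hxK, hxR⟩
    obtain ⟨y, hy⟩ := hxR
    have hbx : b x = x := by
      have h := LinearMap.mem_ker.1 hxK
      rw [hflin_apply] at h
      exact sub_eq_zero.1 h
    have hby : b y - y = x := by
      rw [hflin_apply] at hy
      exact hy
    have hnorm : ∀ K : ℕ, (K:ℝ) * ‖x‖ ≤ (C + 1) * ‖y‖ := by
      intro K
      have hgeo := geom_sum_mul b K
      have happ := congrArg (fun f : (Fin n → ℝ) →L[ℝ] (Fin n → ℝ) => f y) hgeo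
      simp only [ContinuousLinearMap.mul_apply, ContinuousLinearMap.sub_apply,
        ContinuousLinearMap.sum_apply, ContinuousLinearMap.one_apply] at happ
      rw [hby] at happ
      have hsum : ∑ i ∈ Finset.range K, (b ^ i) x = (K : ℕ) • x := by
        rw [Finset.sum_congr rfl (fun i _ => hbkfix x hbx i)]
        simp
      rw [hsum] at happ
      have hnn : ‖(K:ℕ) • x‖ = (K:ℝ) * ‖x‖ := by
        rw [← Nat.cast_smul_eq_nsmul ℝ, norm_smul, Real.norm_natCast]
      calc (K:ℝ) * ‖x‖ = ‖(K:ℕ) • x‖ := hnn.symm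
        _ = ‖(b ^ K) y - y‖ := by rw [happ]
        _ ≤ ‖(b ^ K) y‖ + ‖y‖ := norm_sub_le _ _
        _ ≤ C * ‖y‖ + ‖y‖ := by
            have h1 : ‖(b ^ K) y‖ ≤ ‖b ^ K‖ * ‖y‖ := ContinuousLinearMap.le_opNorm _ _
            have h2 := hbop K
            nlinarith [norm_nonneg y, norm_nonneg (b ^ K)]
        _ = (C + 1) * ‖y‖ := by ring
    by_contra hx0
    have hxpos : 0 < ‖x‖ := norm_pos_iff.2 hx0
    obtain ⟨K, hK⟩ := exists_nat_gt (((C + 1) * ‖y‖) / ‖x‖)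
    have hK2 := hnorm K
    rw [div_lt_iff₀ hxpos] at hK
    linarith
  have hsup : LinearMap.ker flin ⊔ LinearMap.range flin = ⊤ := by
    apply Submodule.eq_top_of_finrank_eq
    have h1 := LinearMap.finrank_range_add_finrank_ker flin
    have h2 := Submodule.finrank_sup_add_finrank_inf_eq
      (LinearMap.ker flin) (LinearMap.range flin)
    rw [hdisj, finrank_bot] at h2
    omega
  -- conclude convergence
  intro x0
  have hx0 : x0 ∈ LinearMap.ker flin ⊔ LinearMap.range flin := by rw [hsup]; trivial
  obtain ⟨u, hu, w, hw, huw⟩ := Submodule.mem_sup.1 hx0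
  have hbu : b u = u := by
    have h := LinearMap.mem_ker.1 hu
    rw [hflin_apply] at h
    exact sub_eq_zero.1 h
  have hau : ∀ k : ℕ, (a ^ k) u = u := by
    have ha1 : a u = u := by
      rw [hab]
      simp only [ContinuousLinearMap.add_apply, ContinuousLinearMap.smul_apply,
        ContinuousLinearMap.one_apply, hbu]
      module
    intro k
    induction k with
    | zero => simp
    | succ k ih => rw [pow_succ, ContinuousLinearMap.mul_apply, ha1, ih]
  obtain ⟨y, hy⟩ := hw
  have hby : (b - 1) y = w := by
    rw [hflin_apply] at hy
    rw [ContinuousLinearMap.sub_apply, ContinuousLinearMap.one_apply]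
    exact hy
  refine ⟨u, ?_⟩
  have heq : ∀ k : ℕ, (A ^ k) *ᵥ x0 = u + (a ^ k * (b - 1)) y := by
    intro k
    have h1 : (A ^ k) *ᵥ x0 = (a ^ k) x0 := by rw [ha_def, ← toCLM_pow, toCLM_apply]
    rw [h1, ← huw, map_add, hau k]
    congr 1
    rw [ContinuousLinearMap.mul_apply, hby]
  have htail : Tendsto (fun k : ℕ => (a ^ k * (b - 1)) y) atTop (nhds 0) := by
    rw [tendsto_zero_iff_norm_tendsto_zero]
    refine squeeze_zero (g := fun k : ℕ => C * Db η k * ‖y‖) (fun k => norm_nonneg _)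
      (fun k => ?_) ?_
    · calc ‖(a ^ k * (b - 1)) y‖ ≤ ‖a ^ k * (b - 1)‖ * ‖y‖ :=
            ContinuousLinearMap.le_opNorm _ _
        _ ≤ C * Db η k * ‖y‖ := mul_le_mul_of_nonneg_right (hE k) (norm_nonneg y)
    · have := ((Db_tendsto η hη0 hη1).const_mul C).mul_const ‖y‖
      simpa using this
  have hfin : Tendsto (fun k : ℕ => u + (a ^ k * (b - 1)) y) atTop (nhds (u + 0)) :=
    tendsto_const_nhds.add htail
  rw [add_zero] at hfin
  exact Tendsto.congr (fun k => (heq k).symm) hfin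


/-- the DT LTI system is convergent iff for some `η ∈ (0,1)` the auxiliary
system with matrix `A_η = (1/η) A − ((1−η)/η) I` is marginally stable. -/
theorem dt_convergent_iff_aux_marginally_stable
    (n : ℕ) (A : Matrix (Fin n) (Fin n) ℝ) :
    DTConvergent A ↔
      ∃ η : ℝ, 0 < η ∧ η < 1 ∧
        DTMarginallyStable ((1 / η) • A - ((1 - η) / η) • (1 : Matrix (Fin n) (Fin n) ℝ)) := by
  constructor
  · exact fun h => dt_forward h
  · rintro ⟨η, h0, h1, hMS⟩
    exact dt_backward h0 h1 hMS
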